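/- With velocity field u(λ,φ) = −b cos λ sin φ, v(λ,φ) = b sin λ, and pressure π₀(λ,φ) = C − (b cos λ cos φ/(2c₀))·(b cos λ cos φ + 2l₀), the steady momentum balance on the sphere holds: (u/cos φ)∂u/∂λ + v∂u/∂φ − (l₀ + u·tan φ)·v + (c₀/cos φ)∂π₀/∂λ = 0 and (u/cos φ)∂v/∂λ + v∂v/∂φ + (l₀ + u·tan φ)·u + c₀∂π₀/∂φ = 0, at every point where cos φ ≠ 0. -/

import Mathlib

open Real

noncomputable def pdx (g : ℝ → ℝ → ℝ) (a b : ℝ) : ℝ := deriv (fun s => g s b) a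
noncomputable def pdy (g : ℝ → ℝ → ℝ) (a b : ℝ) : ℝ := deriv (fun s => g a s) b

/-- Velocity components of the spherical vortex. -/
noncomputable def usph (b : ℝ) (l p : ℝ) : ℝ := -b * Real.cos l * Real.sin p
noncomputable def vsph (b : ℝ) (l p : ℝ) : ℝ := b * Real.sin l

/-- Pressure of the spherical vortex. -/
noncomputable def pisph (b C c₀ l₀ : ℝ) (l p : ℝ) : ℝ :=
  C - (b * Real.cos l * Real.cos p / (2 * c₀)) * (b * Real.cos l * Real.cos p + 2 * l₀)

/-- The spherical vortex field and pressure satisfy the stationary spherical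
momentum equations wherever `cos φ ≠ 0`. -/
theorem spherical_vortex_steady_momentum
    (b C l₀ c₀ : ℝ) (hc : 0 < c₀) :
    ∀ l p : ℝ, Real.cos p ≠ 0 →
      ((usph b l p / Real.cos p) * pdx (usph b) l p + vsph b l p * pdy (usph b) l p
        - (l₀ + usph b l p * Real.tan p) * vsph b l p
        + (c₀ / Real.cos p) * pdx (pisph b C c₀ l₀) l p = 0) ∧
      ((usph b l p / Real.cos p) * pdx (vsph b) l p + vsph b l p * pdy (vsph b) l p
        + (l₀ + usph b l p * Real.tan p) * usph b l p
        + c₀ * pdy (pisph b C c₀ l₀) l p = 0) := by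
  intro l p hp
  have hc0 : c₀ ≠ 0 := ne_of_gt hc
  -- derivative helpers
  have hgl : HasDerivAt (fun s => b * Real.cos s * Real.cos p)
      (b * (-Real.sin l) * Real.cos p) l := by
    simpa using ((Real.hasDerivAt_cos l).const_mul b).mul_const (Real.cos p)
  have hgp : HasDerivAt (fun s => b * Real.cos l * Real.cos s)
      (b * Real.cos l * (-Real.sin p)) p := by
    simpa using (Real.hasDerivAt_cos p).const_mul (b * Real.cos l)
  have hu_x : pdx (usph b) l p = b * Real.sin l * Real.sin p := by
    have : HasDerivAt (fun s => -b * Real.cos s * Real.sin p)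
        (-b * (-Real.sin l) * Real.sin p) l := by
      simpa using ((Real.hasDerivAt_cos l).const_mul (-b)).mul_const (Real.sin p)
    have := this.deriv
    simp only [pdx, usph]
    rw [this]; ring
  have hu_y : pdy (usph b) l p = -b * Real.cos l * Real.cos p := by
    have : HasDerivAt (fun s => -b * Real.cos l * Real.sin s)
        (-b * Real.cos l * Real.cos p) p := by
      simpa using (Real.hasDerivAt_sin p).const_mul (-b * Real.cos l)
    simp only [pdy, usph]
    rw [this.deriv]
  have hv_x : pdx (vsph b) l p = b * Real.cos l := by
    have : HasDerivAt (fun s => b * Real.sin s) (b * Real.cos l) l := by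
      simpa using (Real.hasDerivAt_sin l).const_mul b
    simp only [pdx, vsph]
    rw [this.deriv]
  have hv_y : pdy (vsph b) l p = 0 := by
    simp [pdy, vsph]
  have hpi_x : pdx (pisph b C c₀ l₀) l p =
      -((b * (-Real.sin l) * Real.cos p) / (2 * c₀)
          * (b * Real.cos l * Real.cos p + 2 * l₀)
        + (b * Real.cos l * Real.cos p / (2 * c₀)) * (b * (-Real.sin l) * Real.cos p)) := by
    have h : HasDerivAt (fun s => pisph b C c₀ l₀ s p)
        (0 - ((b * (-Real.sin l) * Real.cos p) / (2 * c₀)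
            * (b * Real.cos l * Real.cos p + 2 * l₀)
          + (b * Real.cos l * Real.cos p / (2 * c₀)) * (b * (-Real.sin l) * Real.cos p))) l := by
      simpa [pisph] using
        (hasDerivAt_const l C).fun_sub ((hgl.div_const (2 * c₀)).fun_mul (hgl.add_const (2 * l₀)))
    rw [pdx, h.deriv]; ring
  have hpi_y : pdy (pisph b C c₀ l₀) l p =
      -((b * Real.cos l * (-Real.sin p)) / (2 * c₀)
          * (b * Real.cos l * Real.cos p + 2 * l₀)
        + (b * Real.cos l * Real.cos p / (2 * c₀)) * (b * Real.cos l * (-Real.sin p))) := by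
    have h : HasDerivAt (fun s => pisph b C c₀ l₀ l s)
        (0 - ((b * Real.cos l * (-Real.sin p)) / (2 * c₀)
            * (b * Real.cos l * Real.cos p + 2 * l₀)
          + (b * Real.cos l * Real.cos p / (2 * c₀)) * (b * Real.cos l * (-Real.sin p)))) p := by
      simpa [pisph] using
        (hasDerivAt_const p C).fun_sub ((hgp.div_const (2 * c₀)).fun_mul (hgp.add_const (2 * l₀)))
    rw [pdy, h.deriv]; ring
  rw [hu_x, hu_y, hv_x, hv_y, hpi_x, hpi_y]
  simp only [usph, vsph, Real.tan_eq_sin_div_cos]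
  refine ⟨by field_simp; ring, ?_⟩
  field_simp
  linear_combination (2 * b ^ 2 * Real.cos l ^ 2 * Real.sin p) *
    Real.sin_sq_add_cos_sq p
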